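/- Let Y be a separable Banach space with the bounded approximation property, and let Z be a dense subspace of Y. Then there exists a sequence of bounded linear maps T_n : Y → Y with range contained in Z such that ‖T_n y − y‖ → 0 as n → ∞ for every y ∈ Y. -/

import Mathlib

open Filter Finset

lemma perturb_to_dense {Y : Type*} [NormedAddCommGroup Y] [NormedSpace ℂ Y]
    (Z : Submodule ℂ Y) (hZdense : Dense (Z : Set Y))
    (S : Y →L[ℂ] Y) (hfin : FiniteDimensional ℂ (LinearMap.range (S : Y →ₗ[ℂ] Y)))
    {δ : ℝ} (hδ : 0 < δ) :
    ∃ T : Y →L[ℂ] Y, LinearMap.range (T : Y →ₗ[ℂ] Y) ≤ Z ∧ ‖T - S‖ ≤ δ := by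
  haveI : FiniteDimensional ℂ (LinearMap.range (S : Y →ₗ[ℂ] Y)) := hfin
  set V := LinearMap.range (S : Y →ₗ[ℂ] Y) with hV
  let b := Module.finBasis ℂ V
  set m := Module.finrank ℂ V with hm
  let S' : Y →L[ℂ] V := S.codRestrict V (fun y => LinearMap.mem_range_self _ y)
  let f : Fin m → (Y →L[ℂ] ℂ) :=
    fun j => (LinearMap.toContinuousLinearMap (b.coord j)).comp S'
  have key : ∀ y : Y, S y = ∑ j, (f j y) • ((b j : V) : Y) := by
    intro y
    have h1 : (S' y : V) = ∑ j, b.repr (S' y) j • b j := (b.sum_repr (S' y)).symm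
    have h2 : S y = ((S' y : V) : Y) := rfl
    rw [h2, h1]
    push_cast
    rfl
  have hz : ∀ j : Fin m, ∃ z : Y, z ∈ Z ∧
      ‖z - (b j : Y)‖ < δ / ((m + 1) * (‖f j‖ + 1)) := by
    intro j
    have hr : (0:ℝ) < δ / ((m + 1) * (‖f j‖ + 1)) := by positivity
    obtain ⟨z, hz1, hz2⟩ := Metric.dense_iff.mp hZdense (b j) _ hr
    exact ⟨z, hz2, by simpa [dist_eq_norm, norm_sub_rev] using hz1⟩
  choose z hzZ hznorm using hz
  refine ⟨∑ j, (f j).smulRight (z j), ?_, ?_⟩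
  · rintro y ⟨x, rfl⟩
    simp only [ContinuousLinearMap.coe_sum', Finset.sum_apply,
      ContinuousLinearMap.smulRight_apply, ContinuousLinearMap.coe_coe]
    exact Submodule.sum_mem _ fun j _ => Submodule.smul_mem _ _ (hzZ j)
  · apply ContinuousLinearMap.opNorm_le_bound _ hδ.le
    intro y
    have hTy : (∑ j, (f j).smulRight (z j)) y - S y = ∑ j, (f j y) • (z j - (b j : Y)) := by
      rw [key y]
      simp only [ContinuousLinearMap.sum_apply, ContinuousLinearMap.smulRight_apply,
        smul_sub, Finset.sum_sub_distrib]
    rw [ContinuousLinearMap.sub_apply, hTy]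
    calc ‖∑ j, (f j y) • (z j - (b j : Y))‖
        ≤ ∑ j, ‖(f j y) • (z j - (b j : Y))‖ := norm_sum_le _ _
      _ ≤ ∑ j : Fin m, δ / (m + 1) * ‖y‖ := by
          apply Finset.sum_le_sum
          intro j _
          rw [norm_smul]
          calc ‖f j y‖ * ‖z j - (b j : Y)‖
              ≤ (‖f j‖ * ‖y‖) * (δ / ((m + 1) * (‖f j‖ + 1))) := by
                apply mul_le_mul ((f j).le_opNorm y) (hznorm j).le (norm_nonneg _)
                positivity
            _ = (‖f j‖ * (δ / ((m + 1) * (‖f j‖ + 1)))) * ‖y‖ := by ring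
            _ ≤ ((‖f j‖ + 1) * (δ / ((m + 1) * (‖f j‖ + 1)))) * ‖y‖ := by
                gcongr; linarith
            _ = δ / (m + 1) * ‖y‖ := by
                have h1 : (0:ℝ) < ‖f j‖ + 1 := by positivity
                have h2 : (0:ℝ) < (m:ℝ) + 1 := by positivity
                field_simp
      _ = m * (δ / (m + 1) * ‖y‖) := by
          rw [Finset.sum_const, Finset.card_fin]; simp [nsmul_eq_mul]
      _ ≤ δ * ‖y‖ := by
          rw [show (m:ℝ) * (δ / (m + 1) * ‖y‖) = ((m:ℝ)/(m+1)) * (δ * ‖y‖) by ring]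
          have : (m:ℝ)/(m+1) ≤ 1 := by
            rw [div_le_one (by positivity)]; linarith
          nlinarith [norm_nonneg y, hδ.le, mul_nonneg hδ.le (norm_nonneg y)]

theorem stmt_3 {Y : Type*} [NormedAddCommGroup Y] [NormedSpace ℂ Y] [CompleteSpace Y]
    [TopologicalSpace.SeparableSpace Y]
    (Z : Submodule ℂ Y) (hZdense : Dense (Z : Set Y))
    (hBAP : ∃ M : ℝ, ∀ K : Set Y, IsCompact K → ∀ ε : ℝ, 0 < ε →
      ∃ T : Y →L[ℂ] Y, FiniteDimensional ℂ (LinearMap.range (T : Y →ₗ[ℂ] Y)) ∧ ‖T‖ ≤ M ∧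
        ∀ y ∈ K, ‖T y - y‖ ≤ ε) :
    ∃ T : ℕ → Y →L[ℂ] Y, (∀ n, LinearMap.range (T n : Y →ₗ[ℂ] Y) ≤ Z) ∧
      ∀ y : Y, Tendsto (fun n => ‖T n y - y‖) atTop (nhds 0) := by
  obtain ⟨M, hM⟩ := hBAP
  have hM0 : 0 ≤ M := by
    obtain ⟨S, -, hS, -⟩ := hM {0} isCompact_singleton 1 one_pos
    exact le_trans (norm_nonneg S) hS
  haveI : Nonempty Y := ⟨0⟩
  obtain ⟨u, hu⟩ := TopologicalSpace.exists_dense_seq Y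
  have hex : ∀ n : ℕ, ∃ T : Y →L[ℂ] Y, LinearMap.range (T : Y →ₗ[ℂ] Y) ≤ Z ∧ ‖T‖ ≤ M + 1 ∧
      ∀ i ≤ n, ‖T (u i) - u i‖ ≤ 2 * (‖u i‖ + 1) / (n + 1) := by
    intro n
    have hεpos : (0:ℝ) < 1 / (n + 1) := by positivity
    obtain ⟨S, hSfin, hSnorm, hSclose⟩ :=
      hM (Set.range fun i : Fin (n + 1) => u i) ((Set.finite_range _).isCompact)
        (1 / (n + 1)) hεpos
    obtain ⟨T, hTZ, hTS⟩ := perturb_to_dense Z hZdense S hSfin hεpos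
    refine ⟨T, hTZ, ?_, ?_⟩
    · calc ‖T‖ ≤ ‖T - S‖ + ‖S‖ := by
            simpa using norm_add_le (T - S) S
        _ ≤ 1 / (n + 1) + M := add_le_add hTS hSnorm
        _ ≤ M + 1 := by
            have : (1:ℝ) / (n + 1) ≤ 1 := by
              rw [div_le_one (by positivity)]; linarith [Nat.cast_nonneg (α := ℝ) n]
            linarith
    · intro i hi
      have hmem : u i ∈ Set.range fun j : Fin (n + 1) => u j :=
        ⟨⟨i, Nat.lt_succ_of_le hi⟩, rfl⟩
      calc ‖T (u i) - u i‖ ≤ ‖(T - S) (u i)‖ + ‖S (u i) - u i‖ := by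
            rw [ContinuousLinearMap.sub_apply]
            simpa using norm_add_le (T (u i) - S (u i)) (S (u i) - u i)
        _ ≤ ‖T - S‖ * ‖u i‖ + 1 / (n + 1) :=
            add_le_add ((T - S).le_opNorm (u i)) (hSclose _ hmem)
        _ ≤ (1 / (n + 1)) * ‖u i‖ + 1 / (n + 1) := by
            gcongr
        _ ≤ 2 * (‖u i‖ + 1) / (n + 1) := by
            have h : 1/((n:ℝ)+1)*‖u i‖ + 1/((n:ℝ)+1) = (‖u i‖+1)/((n:ℝ)+1) := by ring
            rw [h]
            gcongr
            linarith [norm_nonneg (u i)]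
  choose T hTZ hTnorm hTclose using hex
  refine ⟨T, hTZ, ?_⟩
  intro y
  rw [Metric.tendsto_atTop]
  intro ε hε
  have hM2 : (0:ℝ) < M + 2 := by linarith
  obtain ⟨i, hi⟩ := hu.exists_dist_lt y (show (0:ℝ) < ε / (3 * (M + 2)) by positivity)
  rw [dist_eq_norm] at hi
  obtain ⟨N, hN⟩ := exists_nat_gt (3 * (2 * (‖u i‖ + 1)) / ε)
  refine ⟨max N i, fun n hn => ?_⟩
  have hni : i ≤ n := le_trans (le_max_right N i) hn
  have hnN : N ≤ n := le_trans (le_max_left N i) hn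
  have hclose : ‖T n (u i) - u i‖ < ε / 3 := by
    have h1 := hTclose n i hni
    have h2 : 2 * (‖u i‖ + 1) / (↑n + 1) < ε / 3 := by
      rw [div_lt_div_iff₀ (by positivity) (by norm_num)]
      have : 3 * (2 * (‖u i‖ + 1)) / ε < (n:ℝ) + 1 := by
        calc 3 * (2 * (‖u i‖ + 1)) / ε < (N:ℝ) := hN
          _ ≤ (n:ℝ) := by exact_mod_cast hnN
          _ ≤ (n:ℝ) + 1 := by linarith
      rw [div_lt_iff₀ hε] at this
      nlinarith
    linarith
  have hmain : ‖T n y - y‖ < ε := by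
    have hdecomp : T n y - y = T n (y - u i) + (T n (u i) - u i) + (u i - y) := by
      rw [map_sub]; abel
    calc ‖T n y - y‖ ≤ ‖T n (y - u i)‖ + ‖T n (u i) - u i‖ + ‖u i - y‖ := by
          rw [hdecomp]; exact norm_add₃_le
      _ ≤ (M + 1) * ‖y - u i‖ + ‖T n (u i) - u i‖ + ‖y - u i‖ := by
          gcongr
          · exact ((T n).le_opNorm _).trans (by gcongr; exact hTnorm n)
          · rw [norm_sub_rev]
      _ < (M + 1) * (ε / (3 * (M + 2))) + ε / 3 + ε / (3 * (M + 2)) := by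
          have h2 : (M + 1) * ‖y - u i‖ < (M + 1) * (ε / (3 * (M + 2))) :=
            mul_lt_mul_of_pos_left hi (by linarith)
          linarith [hclose, hi]
      _ = (M + 2) * (ε / (3 * (M + 2))) + ε / 3 := by ring
      _ = ε / 3 + ε / 3 := by
          rw [mul_div_assoc', mul_comm]
          rw [mul_div_assoc, mul_comm (3:ℝ) (M+2), ← div_div, div_self (ne_of_gt hM2)]
          ring
      _ < ε := by linarith
  rw [Real.dist_eq, sub_zero, abs_of_nonneg (norm_nonneg _)]
  exact hmain
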